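/- Let G be an R-group, g, h ∈ G, and n a positive integer. If g^n is conjugate to h^n in G, then g is conjugate to h in G. In particular, the conjugacy class of g^n has a unique n-th root, namely the conjugacy class of g. -/
import Mathlib

lemma conj_of_conj_pow {G : Type*} [Group G]
    (hR : ∀ (g h : G) (n : ℕ), 1 ≤ n → g ^ n = h ^ n → g = h)
    {g h : G} {n : ℕ} (hn : 0 < n) (hc : IsConj (g ^ n) (h ^ n)) :
    IsConj g h := by
  obtain ⟨c, hc⟩ := isConj_iff.mp hc
  exact isConj_iff.mpr ⟨c, hR _ _ n hn (by rw [conj_pow, hc])⟩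
/-- Let `G` be an R-group, `g h ∈ G`, and `n` a positive integer.  If `g ^ n` is
conjugate to `h ^ n` in `G`, then `g` is conjugate to `h`.  In particular, the
conjugacy class of `g ^ n` has a unique `n`-th root, namely the conjugacy class
of `g`. -/
theorem stmt3 {G : Type*} [Group G]
    (hR : ∀ (g h : G) (n : ℕ), 1 ≤ n → g ^ n = h ^ n → g = h)
    (g h : G) (n : ℕ) (hn : 0 < n) :
    (IsConj (g ^ n) (h ^ n) → IsConj g h) ∧
      (∀ h₁ h₂ : G, IsConj (h₁ ^ n) (g ^ n) → IsConj (h₂ ^ n) (g ^ n) →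
        IsConj h₁ h₂) := by
  refine ⟨fun hc => conj_of_conj_pow hR hn hc, fun h₁ h₂ hc1 hc2 =>
    conj_of_conj_pow hR hn (hc1.trans hc2.symm)⟩
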